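/- (Freedman's inequality) Let (X_i, F_i)_{i=0}^m be a supermartingale with increments bounded: |X_i - X_{i-1}| ≤ R almost surely for all i. Let V(m) = Σ_{i=1}^m E[(X_i - X_{i-1})² | F_{i-1}] be the quadratic variation. Then for all α, β > 0, P(X_m - X_0 ≥ α and V(m) ≤ β) ≤ exp(-α²/(2(β + Rα))). -/

import Mathlib

open MeasureTheory

lemma exp_quad_bound {y s : ℝ} (hs0 : 0 ≤ s) (hs1 : s ≤ 1) (hy : |y| ≤ s) :
    Real.exp y ≤ 1 + y + y ^ 2 * Real.exp s / 2 := by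
  have hy1 : |y| ≤ 1 := hy.trans hs1
  have h := Real.exp_bound hy1 (n := 3) (by norm_num)
  have hsum : ∑ m ∈ Finset.range 3, y ^ m / m.factorial = 1 + y + y ^ 2 / 2 := by
    norm_num [Finset.sum_range_succ]
  rw [hsum] at h
  have h2 := (abs_sub_le_iff.1 h).1
  norm_num [Nat.factorial] at h2
  have h3 : |y| ^ 3 ≤ s * y ^ 2 := by
    have he : |y| ^ 3 = |y| * y ^ 2 := by rw [← sq_abs]; ring
    rw [he]
    nlinarith [sq_nonneg y, abs_nonneg y]
  have hes : s + 1 ≤ Real.exp s := Real.add_one_le_exp s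
  nlinarith [sq_nonneg y]

lemma freedman_arith {R α β t : ℝ} (hR : 0 < R) (hα : 0 < α) (hβ : 0 < β)
    (ht : t = α / (β + R * α)) :
    α ^ 2 / (2 * (β + R * α)) ≤ t * α - (t ^ 2 * Real.exp (t * R) / 2) * β := by
  have hD : 0 < β + R * α := by positivity
  have hs1 : t * R < 1 := by
    rw [ht, div_mul_eq_mul_div, div_lt_one hD]; nlinarith
  have hs0 : 0 < t * R := by rw [ht]; positivity
  have hexp : Real.exp (t * R) * (1 - t * R) ≤ 1 := by
    have h2 : 1 - t*R ≤ Real.exp (-(t*R)) := by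
      have := Real.add_one_le_exp (-(t*R)); linarith
    calc Real.exp (t*R) * (1 - t*R) ≤ Real.exp (t*R) * Real.exp (-(t*R)) :=
          mul_le_mul_of_nonneg_left h2 (Real.exp_pos _).le
      _ = 1 := by rw [← Real.exp_add]; simp
  have h1ms : 1 - t * R = β / (β + R * α) := by
    rw [ht]; field_simp; ring
  have ht0 : 0 < t := by rw [ht]; positivity
  have hexp2 : Real.exp (t * R) ≤ (β + R * α) / β := by
    rw [h1ms] at hexp
    rw [le_div_iff₀ hβ]
    calc Real.exp (t*R) * β = Real.exp (t*R) * (β / (β + R*α)) * (β + R*α) := by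
          field_simp
      _ ≤ 1 * (β + R*α) := mul_le_mul_of_nonneg_right hexp hD.le
      _ = β + R*α := one_mul _
  have key : t ^ 2 * Real.exp (t * R) / 2 * β ≤ α ^ 2 / (2 * (β + R * α)) := by
    have h5 : t ^ 2 * Real.exp (t * R) * β ≤ t ^ 2 * (β + R * α) := by
      calc t ^ 2 * Real.exp (t*R) * β ≤ t ^ 2 * ((β + R*α)/β) * β := by
            gcongr
        _ = t ^ 2 * (β + R*α) := by field_simp
    have ht2 : t ^ 2 * (β + R * α) = α ^ 2 / (β + R * α) := by
      rw [ht]; field_simp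
    rw [ht2] at h5
    have hdd : α ^ 2 / (2 * (β + R * α)) = (α ^ 2 / (β + R * α)) / 2 := by
      rw [div_div]; ring_nf
    linarith
  have hta : t * α = α ^ 2 / (β + R * α) := by rw [ht]; field_simp
  rw [hta]
  have hdd : α ^ 2 / (2 * (β + R * α)) = (α ^ 2 / (β + R * α)) / 2 := by
    rw [div_div]; ring_nf
  linarith

/-- Freedman's inequality for supermartingales with bounded increments. -/
theorem stmt_12 {Ω : Type*} {m0 : MeasurableSpace Ω} (μ : Measure Ω) [IsProbabilityMeasure μ]
    (ℱ : Filtration ℕ m0) (X : ℕ → Ω → ℝ) (m : ℕ) (R α β : ℝ)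
    (hR : 0 < R) (hα : 0 < α) (hβ : 0 < β)
    (hsm : Supermartingale X ℱ μ)
    (hbdd : ∀ i, 1 ≤ i → i ≤ m → ∀ᵐ ω ∂μ, |X i ω - X (i-1) ω| ≤ R) :
    μ {ω | α ≤ X m ω - X 0 ω ∧
        (∑ i ∈ Finset.Icc 1 m,
          (μ[fun ω' => (X i ω' - X (i-1) ω') ^ 2 | ℱ (i-1)]) ω) ≤ β}
      ≤ ENNReal.ofReal (Real.exp (-α ^ 2 / (2 * (β + R * α)))) := by
  classical
  have hDpos : 0 < β + R * α := by positivity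
  set t := α / (β + R * α) with htdef
  have ht0 : 0 < t := by positivity
  set c := t ^ 2 * Real.exp (t * R) / 2 with hcdef
  have hc0 : 0 < c := by positivity
  have hs0 : 0 < t * R := by positivity
  have hs1 : t * R < 1 := by
    rw [htdef, div_mul_eq_mul_div, div_lt_one hDpos]; nlinarith
  set V : ℕ → Ω → ℝ := fun n ω => ∑ i ∈ Finset.Icc 1 n,
      (μ[fun ω' => (X i ω' - X (i-1) ω') ^ 2 | ℱ (i-1)]) ω with hVdef
  set Z : ℕ → Ω → ℝ := fun n ω => Real.exp (t * (X n ω - X 0 ω) - c * V n ω) with hZdef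
  -- measurability
  have hXsm : ∀ n, StronglyMeasurable (X n) := fun n => (hsm.stronglyAdapted n).mono (ℱ.le n)
  have hVsm : ∀ n, StronglyMeasurable[ℱ n] (V (n + 1)) := by
    intro n
    apply Finset.stronglyMeasurable_fun_sum
    intro i hi
    have hi' : i - 1 ≤ n := by
      simp only [Finset.mem_Icc] at hi; omega
    exact stronglyMeasurable_condExp.mono (ℱ.mono hi')
  have hVsm0 : ∀ n, StronglyMeasurable (V n) := by
    intro n
    apply Finset.stronglyMeasurable_fun_sum
    intro i _
    exact stronglyMeasurable_condExp.mono (ℱ.le _)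
  have hZsm : ∀ n, StronglyMeasurable (Z n) := fun n =>
    Real.continuous_exp.comp_stronglyMeasurable
      ((((hXsm n).sub (hXsm 0)).const_mul t).sub ((hVsm0 n).const_mul c))
  -- V nonneg
  have hVnonneg : ∀ n, ∀ᵐ ω ∂μ, 0 ≤ V n ω := by
    intro n
    have h0 : ∀ i : ℕ, ∀ᵐ ω ∂μ,
        0 ≤ (μ[fun ω' => (X i ω' - X (i - 1) ω') ^ 2 | ℱ (i - 1)]) ω := by
      intro i
      filter_upwards [condExp_nonneg (E := ℝ) (m := ℱ (i-1)) (μ := μ)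
        (f := fun ω' => (X i ω' - X (i - 1) ω') ^ 2)
        (Filter.Eventually.of_forall fun ω => sq_nonneg _)] with ω h using h
    filter_upwards [ae_all_iff.2 h0] with ω hω
    exact Finset.sum_nonneg fun i _ => hω i
  -- telescoping bound
  have htel : ∀ n, n ≤ m → ∀ᵐ ω ∂μ, |X n ω - X 0 ω| ≤ n * R := by
    intro n
    induction n with
    | zero => intro _; filter_upwards with ω; simp
    | succ k ih =>
      intro hk
      filter_upwards [ih (by omega), hbdd (k + 1) (by omega) hk] with ω h1 h2
      have h2' : |X (k + 1) ω - X k ω| ≤ R := by simpa using h2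
      calc |X (k + 1) ω - X 0 ω| ≤ |X (k + 1) ω - X k ω| + |X k ω - X 0 ω| :=
            abs_sub_le _ _ _
        _ ≤ R + k * R := add_le_add h2' h1
        _ = (k + 1 : ℕ) * R := by push_cast; ring
  -- Z integrable
  have hZint : ∀ n, n ≤ m → Integrable (Z n) μ := by
    intro n hn
    refine Integrable.mono' (integrable_const (Real.exp (t * (n * R))))
      (hZsm n).aestronglyMeasurable ?_
    filter_upwards [htel n hn, hVnonneg n] with ω h1 h2
    rw [hZdef]
    simp only []
    rw [Real.norm_eq_abs, abs_of_pos (Real.exp_pos _)]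
    apply Real.exp_le_exp.2
    have h3 : t * (X n ω - X 0 ω) ≤ t * (n * R) :=
      mul_le_mul_of_nonneg_left ((le_abs_self _).trans h1) ht0.le
    nlinarith
  -- main induction
  have hZle : ∀ n, n ≤ m → ∫ ω, Z n ω ∂μ ≤ 1 := by
    intro n
    induction n with
    | zero =>
      intro _
      have hZ0 : Z 0 = fun _ => 1 := by
        funext ω
        rw [hZdef]
        simp [hVdef]
      rw [hZ0]
      simp
    | succ k ih =>
      intro hk
      have hk' : k ≤ m := by omega
      set Δ : Ω → ℝ := fun ω => X (k + 1) ω - X k ω with hΔdef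
      set σ2 : Ω → ℝ := μ[fun ω' => Δ ω' ^ 2 | ℱ k] with hσ2def
      have hVsplit : ∀ ω, V (k + 1) ω = V k ω + σ2 ω := by
        intro ω
        rw [hVdef]
        simp only []
        rw [Finset.sum_Icc_succ_top (by omega : 1 ≤ k + 1)]
        rfl
      have hΔsm : StronglyMeasurable Δ := (hXsm (k + 1)).sub (hXsm k)
      have hΔbdd : ∀ᵐ ω ∂μ, |Δ ω| ≤ R := by
        have := hbdd (k + 1) (by omega) hk
        simpa [hΔdef] using this
      have hΔint : Integrable Δ μ := (hsm.integrable (k + 1)).sub (hsm.integrable k)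
      have hΔ2sm : StronglyMeasurable (fun ω => Δ ω ^ 2) := by
        exact hΔsm.pow 2
      have hΔ2int : Integrable (fun ω => Δ ω ^ 2) μ := by
        refine Integrable.mono' (integrable_const (R ^ 2)) hΔ2sm.aestronglyMeasurable ?_
        filter_upwards [hΔbdd] with ω h
        rw [Real.norm_eq_abs, abs_pow]
        exact pow_le_pow_left₀ (abs_nonneg _) h 2
      have hexpΔsm : StronglyMeasurable (fun ω => Real.exp (t * Δ ω)) :=
        Real.continuous_exp.comp_stronglyMeasurable (hΔsm.const_mul t)
      have hexpΔint : Integrable (fun ω => Real.exp (t * Δ ω)) μ := by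
        refine Integrable.mono' (integrable_const (Real.exp (t * R)))
          hexpΔsm.aestronglyMeasurable ?_
        filter_upwards [hΔbdd] with ω h
        rw [Real.norm_eq_abs, abs_of_pos (Real.exp_pos _)]
        exact Real.exp_le_exp.2 (mul_le_mul_of_nonneg_left ((le_abs_self _).trans h) ht0.le)
      have hptwise : ∀ᵐ ω ∂μ, Real.exp (t * Δ ω) ≤ 1 + t * Δ ω + c * Δ ω ^ 2 := by
        filter_upwards [hΔbdd] with ω h
        have hyb : |t * Δ ω| ≤ t * R := by
          rw [abs_mul, abs_of_pos ht0]
          exact mul_le_mul_of_nonneg_left h ht0.le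
        calc Real.exp (t * Δ ω) ≤ 1 + t * Δ ω + (t * Δ ω) ^ 2 * Real.exp (t * R) / 2 :=
              exp_quad_bound hs0.le hs1.le hyb
          _ = 1 + t * Δ ω + c * Δ ω ^ 2 := by rw [hcdef]; ring
      have hgint : Integrable (fun ω => 1 + t * Δ ω + c * Δ ω ^ 2) μ :=
        ((integrable_const (1 : ℝ)).add (hΔint.const_mul t)).add (hΔ2int.const_mul c)
      have hcond1 : μ[fun ω => Real.exp (t * Δ ω)|ℱ k]
          ≤ᵐ[μ] μ[fun ω => 1 + t * Δ ω + c * Δ ω ^ 2|ℱ k] :=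
        condExp_mono hexpΔint hgint hptwise
      have hcond2 : (μ[fun ω => 1 + t * Δ ω + c * Δ ω ^ 2|ℱ k]) =ᵐ[μ]
          fun ω => 1 + t * (μ[Δ|ℱ k]) ω + c * σ2 ω := by
        have e1 : μ[fun ω => 1 + t * Δ ω + c * Δ ω ^ 2|ℱ k] =ᵐ[μ]
            μ[fun ω => 1 + t * Δ ω|ℱ k] + μ[fun ω => c * Δ ω ^ 2|ℱ k] :=
          condExp_add ((integrable_const (1 : ℝ)).add (hΔint.const_mul t))
            (hΔ2int.const_mul c) (ℱ k)
        have e2 : μ[fun ω => 1 + t * Δ ω|ℱ k] =ᵐ[μ]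
            μ[fun _ => (1 : ℝ)|ℱ k] + μ[fun ω => t * Δ ω|ℱ k] :=
          condExp_add (integrable_const (1 : ℝ)) (hΔint.const_mul t) (ℱ k)
        have e3 : μ[fun ω => t * Δ ω|ℱ k] =ᵐ[μ] fun ω => t * (μ[Δ|ℱ k]) ω := by
          have := condExp_smul (μ := μ) (m := ℱ k) (𝕜 := ℝ) t Δ
          filter_upwards [this] with ω h
          exact h
        have e4 : μ[fun _ => (1 : ℝ)|ℱ k] = fun _ => (1 : ℝ) := by
          rw [condExp_const (ℱ.le k)]
        have e5 : μ[fun ω => c * Δ ω ^ 2|ℱ k] =ᵐ[μ] fun ω => c * σ2 ω := by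
          have := condExp_smul (μ := μ) (m := ℱ k) (𝕜 := ℝ) c (fun ω => Δ ω ^ 2)
          filter_upwards [this] with ω h
          rw [hσ2def]
          exact h
        filter_upwards [e1, e2, e3, e5] with ω h1 h2 h3 h5
        rw [h1]
        simp only [Pi.add_apply]
        rw [h2]
        simp only [Pi.add_apply]
        rw [e4, h3, h5]
      have hXkcond : μ[X k|ℱ k] = X k :=
        condExp_of_stronglyMeasurable (ℱ.le k) (hsm.stronglyAdapted k) (hsm.integrable k)
      have hΔcond : ∀ᵐ ω ∂μ, (μ[Δ|ℱ k]) ω ≤ 0 := by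
        have hsub : μ[Δ|ℱ k] =ᵐ[μ] μ[X (k + 1)|ℱ k] - μ[X k|ℱ k] :=
          condExp_sub (hsm.integrable (k + 1)) (hsm.integrable k) (ℱ k)
        filter_upwards [hsub, hsm.condExp_ae_le (Nat.le_succ k)] with ω h1 h2
        rw [h1, Pi.sub_apply, hXkcond]
        linarith
      have hσ2nonneg : ∀ᵐ ω ∂μ, 0 ≤ σ2 ω := by
        filter_upwards [condExp_nonneg (E := ℝ) (m := ℱ k) (μ := μ)
          (f := fun ω => Δ ω ^ 2) (Filter.Eventually.of_forall fun ω => sq_nonneg _)]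
          with ω h using h
      have hkey : ∀ᵐ ω ∂μ, (μ[fun ω' => Real.exp (t * Δ ω')|ℱ k]) ω
          ≤ Real.exp (c * σ2 ω) := by
        filter_upwards [hcond1, hcond2, hΔcond] with ω h1 h2 h3
        calc (μ[fun ω' => Real.exp (t * Δ ω')|ℱ k]) ω
            ≤ (μ[fun ω => 1 + t * Δ ω + c * Δ ω ^ 2|ℱ k]) ω := h1
          _ = 1 + t * (μ[Δ|ℱ k]) ω + c * σ2 ω := h2
          _ ≤ 1 + c * σ2 ω := by nlinarith
          _ ≤ Real.exp (c * σ2 ω) := by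
              linarith [Real.add_one_le_exp (c * σ2 ω)]
      set W : Ω → ℝ := fun ω => Real.exp (t * (X k ω - X 0 ω) - c * V (k + 1) ω) with hWdef
      have hWsm : StronglyMeasurable[ℱ k] W :=
        Real.continuous_exp.comp_stronglyMeasurable
          ((((hsm.stronglyAdapted k).sub ((hsm.stronglyAdapted 0).mono (ℱ.mono (Nat.zero_le k)))).const_mul t).sub
            ((hVsm k).const_mul c))
      have hZW : Z (k + 1) = fun ω => W ω * Real.exp (t * Δ ω) := by
        funext ω
        rw [hZdef, hWdef]
        simp only []
        rw [← Real.exp_add]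
        congr 1
        rw [hΔdef]
        ring
      have hWexp_int : Integrable (fun ω => W ω * Real.exp (t * Δ ω)) μ := by
        rw [← hZW]; exact hZint (k + 1) hk
      have hpull : μ[fun ω => W ω * Real.exp (t * Δ ω)|ℱ k] =ᵐ[μ]
          fun ω => W ω * (μ[fun ω' => Real.exp (t * Δ ω')|ℱ k]) ω :=
        condExp_mul_of_stronglyMeasurable_left hWsm hWexp_int hexpΔint
      have hWZ : ∀ ω, W ω * Real.exp (c * σ2 ω) = Z k ω := by
        intro ω
        rw [hZdef, hWdef]
        simp only []
        rw [← Real.exp_add]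
        congr 1
        rw [hVsplit ω]
        ring
      have hfinal_ae : ∀ᵐ ω ∂μ,
          W ω * (μ[fun ω' => Real.exp (t * Δ ω')|ℱ k]) ω ≤ Z k ω := by
        filter_upwards [hkey] with ω h
        calc W ω * (μ[fun ω' => Real.exp (t * Δ ω')|ℱ k]) ω
            ≤ W ω * Real.exp (c * σ2 ω) :=
              mul_le_mul_of_nonneg_left h (Real.exp_pos _).le
          _ = Z k ω := hWZ ω
      have hcondnonneg : ∀ᵐ ω ∂μ, 0 ≤ (μ[fun ω' => Real.exp (t * Δ ω')|ℱ k]) ω := by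
        filter_upwards [condExp_nonneg (E := ℝ) (m := ℱ k) (μ := μ)
          (f := fun ω' => Real.exp (t * Δ ω'))
          (Filter.Eventually.of_forall fun ω => (Real.exp_pos _).le)] with ω h using h
      have hint2 : Integrable (fun ω => W ω * (μ[fun ω' => Real.exp (t * Δ ω')|ℱ k]) ω) μ := by
        refine Integrable.mono' (hZint k hk')
          (((hWsm.mono (ℱ.le k)).mul (stronglyMeasurable_condExp.mono (ℱ.le k))).aestronglyMeasurable) ?_
        filter_upwards [hfinal_ae, hcondnonneg] with ω h1 h2
        rw [Real.norm_eq_abs, abs_of_nonneg (mul_nonneg (Real.exp_pos _).le h2)]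
        exact h1
      calc ∫ ω, Z (k + 1) ω ∂μ = ∫ ω, W ω * Real.exp (t * Δ ω) ∂μ := by rw [hZW]
        _ = ∫ ω, (μ[fun ω' => W ω' * Real.exp (t * Δ ω')|ℱ k]) ω ∂μ :=
            (integral_condExp (f := fun ω => W ω * Real.exp (t * Δ ω)) (ℱ.le k)).symm
        _ = ∫ ω, W ω * (μ[fun ω' => Real.exp (t * Δ ω')|ℱ k]) ω ∂μ :=
            integral_congr_ae hpull
        _ ≤ ∫ ω, Z k ω ∂μ := integral_mono_ae hint2 (hZint k hk') hfinal_ae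
        _ ≤ 1 := ih hk'
  -- Markov step
  set ε := Real.exp (t * α - c * β) with hεdef
  have hεpos : 0 < ε := Real.exp_pos _
  have hsubset : {ω | α ≤ X m ω - X 0 ω ∧
      (∑ i ∈ Finset.Icc 1 m,
        (μ[fun ω' => (X i ω' - X (i - 1) ω') ^ 2 | ℱ (i - 1)]) ω) ≤ β}
      ⊆ {ω | ε ≤ Z m ω} := by
    intro ω hω
    obtain ⟨h1, h2⟩ := hω
    have hVω : V m ω ≤ β := h2
    rw [Set.mem_setOf_eq, hZdef, hεdef]
    simp only []
    apply Real.exp_le_exp.2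
    have ha : t * α ≤ t * (X m ω - X 0 ω) := mul_le_mul_of_nonneg_left h1 ht0.le
    have hb : c * V m ω ≤ c * β := mul_le_mul_of_nonneg_left hVω hc0.le
    linarith
  have hmarkov := mul_meas_ge_le_integral_of_nonneg
    (Filter.Eventually.of_forall fun ω => (Real.exp_pos _).le : 0 ≤ᵐ[μ] Z m)
    (hZint m le_rfl) ε
  have hne : μ {ω | ε ≤ Z m ω} ≠ ⊤ := measure_ne_top μ _
  have htoReal : (μ {ω | ε ≤ Z m ω}).toReal ≤ Real.exp (c * β - t * α) := by
    have h1 : ε * (μ {ω | ε ≤ Z m ω}).toReal ≤ 1 := hmarkov.trans (hZle m le_rfl)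
    have h2 : (μ {ω | ε ≤ Z m ω}).toReal ≤ 1 / ε := by
      rw [le_div_iff₀ hεpos]
      linarith [mul_comm ε (μ {ω | ε ≤ Z m ω}).toReal]
    refine h2.trans ?_
    rw [one_div, hεdef, ← Real.exp_neg]
    apply Real.exp_le_exp.2
    linarith
  calc μ {ω | α ≤ X m ω - X 0 ω ∧
      (∑ i ∈ Finset.Icc 1 m,
        (μ[fun ω' => (X i ω' - X (i - 1) ω') ^ 2 | ℱ (i - 1)]) ω) ≤ β}
      ≤ μ {ω | ε ≤ Z m ω} := measure_mono hsubset
    _ = ENNReal.ofReal ((μ {ω | ε ≤ Z m ω}).toReal) := (ENNReal.ofReal_toReal hne).symm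
    _ ≤ ENNReal.ofReal (Real.exp (-α ^ 2 / (2 * (β + R * α)))) := by
        apply ENNReal.ofReal_le_ofReal
        refine htoReal.trans (Real.exp_le_exp.2 ?_)
        have harith := freedman_arith hR hα hβ htdef
        rw [neg_div, hcdef]
        linarith
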